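/- Let |ψ⟩ ∈ H^A ⊗ H^B ⊗ H^C be a tripartite pure state whose reduced state on AC is a product: ρ^{AC} = ρ^A ⊗ ρ^C. Then there exist a decomposition of a subspace of H^B as H^{B₁} ⊗ H^{B₂}, a unitary U^B on H^B, and pure states |φ⟩ ∈ H^A ⊗ H^{B₁}, |η⟩ ∈ H^{B₂} ⊗ H^C such that (I^A ⊗ U^B ⊗ I^C)|ψ⟩ = |φ⟩ ⊗ |η⟩. -/

import Mathlib

open ComplexOrder Matrix Kronecker

noncomputable def ptraceB {A B : Type*} [Fintype B] (ρ : Matrix (A × B) (A × B) ℂ) :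
    Matrix A A ℂ := Matrix.of fun a a' => ∑ b, ρ (a, b) (a', b)

noncomputable def ptraceA {A B : Type*} [Fintype A] (ρ : Matrix (A × B) (A × B) ℂ) :
    Matrix B B ℂ := Matrix.of fun b b' => ∑ a, ρ (a, b) (a, b')

/-- For a tripartite state indexed by `A × (B × C)`, trace out the middle factor. -/
noncomputable def ptraceMid {A B C : Type*} [Fintype B]
    (ρ : Matrix (A × (B × C)) (A × (B × C)) ℂ) : Matrix (A × C) (A × C) ℂ :=
  Matrix.of fun x y => ∑ b, ρ (x.1, (b, x.2)) (y.1, (b, y.2))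

noncomputable def outerProd {n : Type*} (ψ : n → ℂ) : Matrix n n ℂ :=
  Matrix.vecMulVec ψ (star ψ)

open scoped InnerProductSpace ComplexConjugate

section Helpers

lemma inner_eucl {n : Type*} [Fintype n] (x y : EuclideanSpace ℂ n) :
    ⟪x, y⟫_ℂ = ∑ i, conj (x i) * y i := by
  simp [PiLp.inner_apply, RCLike.inner_apply]
  exact Finset.sum_congr rfl fun _ _ => mul_comm _ _

lemma trace_eq_sum_eig {n : Type*} [Fintype n] [DecidableEq n] {M : Matrix n n ℂ}
    (hM : M.IsHermitian) : M.trace = ∑ i, (hM.eigenvalues i : ℂ) := by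
  conv_lhs => rw [hM.spectral_theorem]
  rw [Unitary.conjStarAlgAut_apply, Matrix.trace_mul_cycle, Matrix.mem_unitaryGroup_iff'.mp (hM.eigenvectorUnitary).2,
    one_mul, Matrix.trace_diagonal]
  simp

lemma mul_star_self_eq (z : ℂ) : z * star z = ((‖z‖^2 : ℝ) : ℂ) := by
  rw [show star z = conj z from rfl, Complex.mul_conj]
  exact congrArg _ (by rw [Complex.normSq_eq_norm_sq])

lemma conj_mul_self_eq (z : ℂ) : conj z * z = ((‖z‖^2 : ℝ) : ℂ) := by
  rw [mul_comm]
  exact mul_star_self_eq z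

lemma sum_reindex' {A : Type*} {M : Type*} [AddCommMonoid M] (S : Finset A)
    (e : Fin (Fintype.card S) → A) (he : ∀ k, e k = ((Fintype.equivFin S).symm k : A))
    (g : A → M) :
    ∑ k, g (e k) = ∑ i ∈ S, g i := by
  simp_rw [he]
  rw [Equiv.sum_comp (Fintype.equivFin S).symm (fun x : S => g ↑x)]
  exact Finset.sum_coe_sort S g

end Helpers

theorem stmt10 {A B C : Type*} [Fintype A] [Fintype B] [Fintype C] [DecidableEq B]
    (ψ : A × (B × C) → ℂ) (hψ : ∑ x, ‖ψ x‖ ^ 2 = 1)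
    (hprod : ptraceMid (outerProd ψ) =
      ptraceB (outerProd ψ) ⊗ₖ ptraceA (ptraceA (outerProd ψ))) :
    ∃ (n₁ n₂ : ℕ) (ι : Fin n₁ × Fin n₂ ↪ B) (U : Matrix B B ℂ),
      U ∈ Matrix.unitaryGroup B ℂ ∧
      ∃ (φ : A × Fin n₁ → ℂ) (η : Fin n₂ × C → ℂ),
        (∑ x, ‖φ x‖ ^ 2 = 1) ∧ (∑ x, ‖η x‖ ^ 2 = 1) ∧
        (∀ a b₁ b₂ c, (∑ b', U (ι (b₁, b₂)) b' * ψ (a, (b', c))) = φ (a, b₁) * η (b₂, c)) ∧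
        (∀ a b c, b ∉ Set.range ι → (∑ b', U b b' * ψ (a, (b', c))) = 0) := by
  classical
  set ρA := ptraceB (outerProd ψ) with hρA
  set ρC := ptraceA (ptraceA (outerProd ψ)) with hρC
  -- positive semidefiniteness of the reduced states
  have hPA : ρA.PosSemidef := by
    have : ρA = (Matrix.of fun a (bc : B × C) => ψ (a, bc)) *
        (Matrix.of fun a (bc : B × C) => ψ (a, bc))ᴴ := by
      ext a a'
      simp [hρA, ptraceB, outerProd, Matrix.vecMulVec_apply, Matrix.mul_apply]
    rw [this]
    exact Matrix.posSemidef_self_mul_conjTranspose _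
  have hPC : ρC.PosSemidef := by
    have : ρC = (Matrix.of fun c (ab : A × B) => ψ (ab.1, (ab.2, c))) *
        (Matrix.of fun c (ab : A × B) => ψ (ab.1, (ab.2, c)))ᴴ := by
      ext c c'
      simp only [hρC, ptraceA, outerProd, Matrix.of_apply, Matrix.vecMulVec_apply,
        Matrix.mul_apply, Matrix.conjTranspose_apply, Fintype.sum_prod_type]
      rw [Finset.sum_comm]
      simp [Pi.star_apply]
    rw [this]
    exact Matrix.posSemidef_self_mul_conjTranspose _
  have hA : ρA.IsHermitian := hPA.isHermitian
  have hC : ρC.IsHermitian := hPC.isHermitian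
  set p := hA.eigenvalues with hp
  set q := hC.eigenvalues with hq
  have hpnn : ∀ i, 0 ≤ p i := fun i => hPA.eigenvalues_nonneg i
  have hqnn : ∀ j, 0 ≤ q j := fun j => hPC.eigenvalues_nonneg j
  set VA := (hA.eigenvectorUnitary : Matrix A A ℂ) with hVA
  set VC := (hC.eigenvectorUnitary : Matrix C C ℂ) with hVC
  set α := hA.eigenvectorBasis with hα
  set γ := hC.eigenvectorBasis with hγ
  set Ψ : Matrix (A × C) B ℂ := Matrix.of fun x b => ψ (x.1, (b, x.2)) with hΨ
  have hPsiPsi : Ψ * Ψᴴ = ρA ⊗ₖ ρC := by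
    rw [← hprod]
    ext x y
    simp [hΨ, ptraceMid, outerProd, Matrix.vecMulVec_apply, Matrix.mul_apply]
  set T : Matrix (A × C) B ℂ := (VA ⊗ₖ VC)ᴴ * Ψ with hT
  have hVAu : VA ∈ Matrix.unitaryGroup A ℂ := hA.eigenvectorUnitary.2
  have hVCu : VC ∈ Matrix.unitaryGroup C ℂ := hC.eigenvectorUnitary.2
  have hdA : VAᴴ * ρA * VA = Matrix.diagonal (RCLike.ofReal ∘ p) := by
    have := hA.conjStarAlgAut_star_eigenvectorUnitary
    simp only [Unitary.conjStarAlgAut_apply, Unitary.coe_star, star_star,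
      Matrix.star_eq_conjTranspose, Matrix.conjTranspose_conjTranspose] at this
    exact this
  have hdC : VCᴴ * ρC * VC = Matrix.diagonal (RCLike.ofReal ∘ q) := by
    have := hC.conjStarAlgAut_star_eigenvectorUnitary
    simp only [Unitary.conjStarAlgAut_apply, Unitary.coe_star, star_star,
      Matrix.star_eq_conjTranspose, Matrix.conjTranspose_conjTranspose] at this
    exact this
  have hGramM : T * Tᴴ = (Matrix.diagonal (RCLike.ofReal ∘ p)) ⊗ₖ
      (Matrix.diagonal (RCLike.ofReal ∘ q)) := by
    rw [hT, Matrix.conjTranspose_mul, ← Matrix.mul_assoc, Matrix.mul_assoc _ Ψ,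
      hPsiPsi, Matrix.conjTranspose_conjTranspose]
    have h1 : (VA ⊗ₖ VC)ᴴ = VAᴴ ⊗ₖ VCᴴ := by
      ext x y; simp [Matrix.conjTranspose_apply, Matrix.kroneckerMap_apply]
    rw [h1]
    calc (VAᴴ ⊗ₖ VCᴴ) * (ρA ⊗ₖ ρC) * (VA ⊗ₖ VC)
        = ((VAᴴ * ρA) ⊗ₖ (VCᴴ * ρC)) * (VA ⊗ₖ VC) := by rw [← Matrix.mul_kronecker_mul]
      _ = (VAᴴ * ρA * VA) ⊗ₖ (VCᴴ * ρC * VC) := by rw [← Matrix.mul_kronecker_mul]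
      _ = _ := by rw [hdA, hdC]
  have hrec : Ψ = (VA ⊗ₖ VC) * T := by
    rw [hT, ← Matrix.mul_assoc]
    have h2 : (VA ⊗ₖ VC) * (VA ⊗ₖ VC)ᴴ = 1 := by
      have h1 : (VA ⊗ₖ VC)ᴴ = VAᴴ ⊗ₖ VCᴴ := by
        ext x y; simp [Matrix.conjTranspose_apply, Matrix.kroneckerMap_apply]
      rw [h1, ← Matrix.mul_kronecker_mul]
      have e1 : VA * VAᴴ = 1 := by
        have := Matrix.mem_unitaryGroup_iff.mp hVAu
        rwa [Matrix.star_eq_conjTranspose] at this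
      have e2 : VC * VCᴴ = 1 := by
        have := Matrix.mem_unitaryGroup_iff.mp hVCu
        rwa [Matrix.star_eq_conjTranspose] at this
      rw [e1, e2, Matrix.one_kronecker_one]
    rw [h2, Matrix.one_mul]
  -- entrywise Gram identity
  have hGram : ∀ (i : A) (j : C) (i' : A) (j' : C),
      (∑ b, T (i,j) b * star (T (i',j') b))
        = (if i = i' then ((p i : ℂ)) else 0) * (if j = j' then ((q j : ℂ)) else 0) := by
    intro i j i' j'
    have h := congrFun (congrFun hGramM ((i,j) : A × C)) ((i',j') : A × C)
    rw [Matrix.mul_apply] at h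
    simp only [Matrix.conjTranspose_apply, Matrix.kroneckerMap_apply,
      Matrix.diagonal_apply, Function.comp_apply] at h
    convert h using 2 <;> simp
  -- entrywise reconstruction
  have hrecE : ∀ (a : A) (b : B) (c : C),
      ψ (a,(b,c)) = ∑ i, ∑ j, α i a * γ j c * T (i,j) b := by
    intro a b c
    have h := congrFun (congrFun hrec ((a,c) : A × C)) b
    rw [Matrix.mul_apply, Fintype.sum_prod_type] at h
    simpa [hΨ, hVA, hVC, hα, hγ, Matrix.kroneckerMap_apply, mul_assoc] using h
  -- vanishing of coefficients with zero weight
  have hZ : ∀ i j, p i * q j = 0 → ∀ b, T (i,j) b = 0 := by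
    intro i j h b
    have hg := hGram i j i j
    simp only [if_pos rfl] at hg
    have hsum : (∑ b', (‖T (i,j) b'‖^2 : ℝ)) = 0 := by
      have hc : ((∑ b', (‖T (i,j) b'‖^2 : ℝ) : ℝ) : ℂ) = 0 := by
        rw [Complex.ofReal_sum]
        calc (∑ b', ((‖T (i,j) b'‖^2 : ℝ) : ℂ))
            = ∑ b', T (i,j) b' * star (T (i,j) b') :=
              Finset.sum_congr rfl fun b' _ => (mul_star_self_eq _).symm
          _ = (p i : ℂ) * (q j : ℂ) := hg
          _ = ((p i * q j : ℝ) : ℂ) := by push_cast; ring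
          _ = 0 := by rw [h]; simp
      exact_mod_cast hc
    have hz := (Finset.sum_eq_zero_iff_of_nonneg
      (fun b' _ => sq_nonneg (‖T (i,j) b'‖))).mp hsum b (Finset.mem_univ b)
    have : ‖T (i,j) b‖ = 0 := by nlinarith [sq_nonneg (‖T (i,j) b‖)]
    exact norm_eq_zero.mp this
  -- traces
  have htrA : ∑ i, p i = 1 := by
    have h1 : Matrix.trace ρA = ((∑ x : A × (B × C), ‖ψ x‖^2 : ℝ) : ℂ) := by
      rw [Matrix.trace, Complex.ofReal_sum, Fintype.sum_prod_type]
      refine Finset.sum_congr rfl fun a _ => ?_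
      simp only [Matrix.diag_apply, hρA, ptraceB, Matrix.of_apply, outerProd,
        Matrix.vecMulVec_apply, Pi.star_apply]
      exact Finset.sum_congr rfl fun bc _ => mul_star_self_eq _
    rw [hψ, trace_eq_sum_eig hA] at h1
    exact_mod_cast h1
  have htrC : ∑ j, q j = 1 := by
    have h1 : Matrix.trace ρC = ((∑ x : A × (B × C), ‖ψ x‖^2 : ℝ) : ℂ) := by
      have h2 : Matrix.trace ρC = ∑ c, ∑ b, ∑ a, ((‖ψ (a,(b,c))‖^2 : ℝ) : ℂ) := by
        rw [Matrix.trace]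
        simp only [Matrix.diag_apply, hρC, ptraceA, Matrix.of_apply, outerProd,
          Matrix.vecMulVec_apply, Pi.star_apply]
        refine Finset.sum_congr rfl fun c _ => Finset.sum_congr rfl fun b _ =>
          Finset.sum_congr rfl fun a _ => mul_star_self_eq _
      rw [h2, Complex.ofReal_sum]
      simp only [Fintype.sum_prod_type, Complex.ofReal_sum]
      calc ∑ c, ∑ b, ∑ a, ((‖ψ (a,(b,c))‖^2 : ℝ) : ℂ)
          = ∑ b, ∑ c, ∑ a, ((‖ψ (a,(b,c))‖^2 : ℝ) : ℂ) := Finset.sum_comm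
        _ = ∑ b, ∑ a, ∑ c, ((‖ψ (a,(b,c))‖^2 : ℝ) : ℂ) :=
            Finset.sum_congr rfl fun b _ => Finset.sum_comm
        _ = ∑ a, ∑ b, ∑ c, ((‖ψ (a,(b,c))‖^2 : ℝ) : ℂ) := Finset.sum_comm
    rw [hψ, trace_eq_sum_eig hC] at h1
    exact_mod_cast h1
  -- the supports of the eigenvalue distributions
  set S₁ : Finset A := Finset.univ.filter (fun i => p i ≠ 0) with hS₁
  set S₂ : Finset C := Finset.univ.filter (fun j => q j ≠ 0) with hS₂
  set e₁ : Fin (Fintype.card S₁) → A := fun k => ((Fintype.equivFin S₁).symm k : A) with he₁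
  set e₂ : Fin (Fintype.card S₂) → C := fun k => ((Fintype.equivFin S₂).symm k : C) with he₂
  have he₁' : ∀ k, e₁ k = ((Fintype.equivFin S₁).symm k : A) := fun k => by rw [he₁]
  have he₂' : ∀ k, e₂ k = ((Fintype.equivFin S₂).symm k : C) := fun k => by rw [he₂]
  have he₁mem : ∀ k, p (e₁ k) ≠ 0 := by
    intro k
    exact (Finset.mem_filter.mp ((Fintype.equivFin S₁).symm k).2).2
  have he₂mem : ∀ k, q (e₂ k) ≠ 0 := by
    intro k
    exact (Finset.mem_filter.mp ((Fintype.equivFin S₂).symm k).2).2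
  have he₁pos : ∀ k, 0 < p (e₁ k) := fun k => lt_of_le_of_ne (hpnn _) (Ne.symm (he₁mem k))
  have he₂pos : ∀ k, 0 < q (e₂ k) := fun k => lt_of_le_of_ne (hqnn _) (Ne.symm (he₂mem k))
  have he₁inj : Function.Injective e₁ := by
    intro k k' h
    exact (Fintype.equivFin S₁).symm.injective (Subtype.ext h)
  have he₂inj : Function.Injective e₂ := by
    intro k k' h
    exact (Fintype.equivFin S₂).symm.injective (Subtype.ext h)
  have hsum₁ : ∑ k, p (e₁ k) = 1 := by
    rw [sum_reindex' S₁ e₁ he₁' p]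
    rw [Finset.sum_subset (Finset.subset_univ S₁) (fun i _ hi => by
      by_contra h
      exact hi (by rw [hS₁, Finset.mem_filter]; exact ⟨Finset.mem_univ i, h⟩))]
    exact htrA
  have hsum₂ : ∑ l, q (e₂ l) = 1 := by
    rw [sum_reindex' S₂ e₂ he₂' q]
    rw [Finset.sum_subset (Finset.subset_univ S₂) (fun j _ hj => by
      by_contra h
      exact hj (by rw [hS₂, Finset.mem_filter]; exact ⟨Finset.mem_univ j, h⟩))]
    exact htrC
  -- the orthonormal family of B-side vectors
  set f : Fin (Fintype.card S₁) × Fin (Fintype.card S₂) → EuclideanSpace ℂ B :=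
    fun x => (WithLp.toLp 2 (fun b => ((((Real.sqrt (p (e₁ x.1) * q (e₂ x.2)))⁻¹ : ℝ)) : ℂ)
      * T (e₁ x.1, e₂ x.2) b) : EuclideanSpace ℂ B) with hf
  have hfapp : ∀ x b, f x b = ((((Real.sqrt (p (e₁ x.1) * q (e₂ x.2)))⁻¹ : ℝ)) : ℂ)
      * T (e₁ x.1, e₂ x.2) b := fun x b => rfl
  have hforth : Orthonormal ℂ f := by
    rw [orthonormal_iff_ite]
    intro x y
    rw [inner_eucl]
    have hinner : (∑ b, conj (f x b) * f y b)
        = (((Real.sqrt (p (e₁ x.1) * q (e₂ x.2)))⁻¹ : ℝ) : ℂ)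
          * ((((Real.sqrt (p (e₁ y.1) * q (e₂ y.2)))⁻¹ : ℝ) : ℂ)
          * ((if e₁ y.1 = e₁ x.1 then ((p (e₁ y.1) : ℂ)) else 0)
            * (if e₂ y.2 = e₂ x.2 then ((q (e₂ y.2) : ℂ)) else 0))) := by
      calc (∑ b, conj (f x b) * f y b)
          = ∑ b, (((Real.sqrt (p (e₁ x.1) * q (e₂ x.2)))⁻¹ : ℝ) : ℂ)
            * ((((Real.sqrt (p (e₁ y.1) * q (e₂ y.2)))⁻¹ : ℝ) : ℂ)
            * (T (e₁ y.1, e₂ y.2) b * star (T (e₁ x.1, e₂ x.2) b))) := by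
            refine Finset.sum_congr rfl fun b _ => ?_
            rw [hfapp, hfapp, _root_.map_mul, Complex.conj_ofReal]
            rw [show conj (T (e₁ x.1, e₂ x.2) b) = star (T (e₁ x.1, e₂ x.2) b) from rfl]
            ring
        _ = _ := by
            rw [← Finset.mul_sum]
            congr 1
            rw [← Finset.mul_sum]
            congr 1
            exact hGram (e₁ y.1) (e₂ y.2) (e₁ x.1) (e₂ x.2)
    rw [hinner]
    by_cases hxy : x = y
    · subst hxy
      rw [if_pos rfl, if_pos rfl, if_pos rfl]
      have hv : 0 < p (e₁ x.1) * q (e₂ x.2) := mul_pos (he₁pos x.1) (he₂pos x.2)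
      have hs : Real.sqrt (p (e₁ x.1) * q (e₂ x.2)) ≠ 0 := ne_of_gt (Real.sqrt_pos.mpr hv)
      have hreal : (Real.sqrt (p (e₁ x.1) * q (e₂ x.2)))⁻¹
          * ((Real.sqrt (p (e₁ x.1) * q (e₂ x.2)))⁻¹ * (p (e₁ x.1) * q (e₂ x.2))) = 1 := by
        field_simp
        rw [Real.sq_sqrt hv.le]
      push_cast
      exact_mod_cast congrArg (fun r : ℝ => (r : ℂ)) hreal
    · rw [if_neg hxy]
      have : x.1 ≠ y.1 ∨ x.2 ≠ y.2 := by
        by_contra h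
        push_neg at h
        exact hxy (Prod.ext h.1 h.2)
      rcases this with h1 | h2
      · rw [if_neg (fun h => h1 ((he₁inj h).symm))]
        ring
      · rw [if_neg (fun h => h2 ((he₂inj h).symm))]
        ring
  -- the embedding of the virtual bipartition into B
  have hcard : Fintype.card S₁ * Fintype.card S₂ ≤ Fintype.card B := by
    have h := hforth.linearIndependent.fintype_card_le_finrank
    simpa only [Fintype.card_prod, Fintype.card_fin, finrank_euclideanSpace] using h
  obtain ⟨ι⟩ : Nonempty ((Fin (Fintype.card S₁) × Fin (Fintype.card S₂)) ↪ B) :=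
    Function.Embedding.nonempty_of_card_le (by simpa using hcard)
  -- extend to an orthonormal basis of ℂ^B
  set v : B → EuclideanSpace ℂ B :=
    fun b => if h : ∃ x, ι x = b then f h.choose else 0 with hv
  have hvι : ∀ x, v (ι x) = f x := by
    intro x
    have h : ∃ y, ι y = ι x := ⟨x, rfl⟩
    simp only [hv]
    rw [dif_pos h]
    exact congrArg f (ι.injective h.choose_spec)
  have hres : Orthonormal ℂ ((Set.range ι).restrict v) := by
    rw [orthonormal_iff_ite]
    rintro ⟨b, hb⟩ ⟨b', hb'⟩
    obtain ⟨x, rfl⟩ := Set.mem_range.mp hb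
    obtain ⟨y, rfl⟩ := Set.mem_range.mp hb'
    simp only [Set.restrict, Set.domRestrict_apply]
    rw [hvι x, hvι y,
      (orthonormal_iff_ite.mp hforth) x y]
    by_cases hxy : x = y
    · subst hxy; simp
    · rw [if_neg hxy, if_neg (fun h => hxy (ι.injective (Subtype.mk_eq_mk.mp h)))]
  obtain ⟨bB, hbB⟩ := hres.exists_orthonormalBasis_extension_of_card_eq
    (by simp [finrank_euclideanSpace])
  have hfb : ∀ x, bB (ι x) = f x := fun x => by rw [hbB (ι x) ⟨x, rfl⟩, hvι x]
  have hbb : ∀ x y : B, (∑ b', star (bB x b') * bB y b') = if x = y then (1:ℂ) else 0 := by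
    intro x y
    have h := (orthonormal_iff_ite.mp bB.orthonormal) x y
    rw [inner_eucl] at h
    simp only [starRingEnd_apply] at h
    exact h
  -- the unitary
  have hU : Matrix.of (fun b b' => star (bB b b')) ∈ Matrix.unitaryGroup B ℂ := by
    rw [Matrix.mem_unitaryGroup_iff]
    ext x y
    rw [Matrix.mul_apply, Matrix.one_apply]
    simp only [Matrix.star_eq_conjTranspose, Matrix.conjTranspose_apply, Matrix.of_apply,
      star_star]
    exact hbb x y
  -- key relation between T and the orthonormal basis
  have hTf : ∀ (k : Fin (Fintype.card S₁)) (l : Fin (Fintype.card S₂)) (b' : B),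
      T (e₁ k, e₂ l) b' = ((Real.sqrt (p (e₁ k) * q (e₂ l)) : ℝ) : ℂ) * bB (ι (k,l)) b' := by
    intro k l b'
    have hv' : 0 < p (e₁ k) * q (e₂ l) := mul_pos (he₁pos k) (he₂pos l)
    have hs : Real.sqrt (p (e₁ k) * q (e₂ l)) ≠ 0 := ne_of_gt (Real.sqrt_pos.mpr hv')
    have h1 : bB (ι (k,l)) b' = f (k,l) b' := by rw [hfb]
    rw [h1, hfapp]
    rw [← mul_assoc, ← Complex.ofReal_mul, mul_inv_cancel₀ hs, Complex.ofReal_one, one_mul]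
  -- key pointwise identity
  have hkey : ∀ (a : A) (b : B) (c : C),
      (∑ b', star (bB b b') * ψ (a,(b',c)))
        = ∑ k, ∑ l, (if ι (k,l) = b
            then ((Real.sqrt (p (e₁ k)) : ℝ) : ℂ) * ((Real.sqrt (q (e₂ l)) : ℝ) : ℂ)
              * α (e₁ k) a * γ (e₂ l) c else 0) := by
    intro a b c
    have step1 : (∑ b', star (bB b b') * ψ (a,(b',c)))
        = ∑ i, ∑ j, α i a * γ j c * (∑ b', star (bB b b') * T (i,j) b') := by
      calc (∑ b', star (bB b b') * ψ (a,(b',c)))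
          = ∑ b', ∑ i, ∑ j, α i a * γ j c * (star (bB b b') * T (i,j) b') := by
            refine Finset.sum_congr rfl fun b' _ => ?_
            rw [hrecE a b' c, Finset.mul_sum]
            refine Finset.sum_congr rfl fun i _ => ?_
            rw [Finset.mul_sum]
            exact Finset.sum_congr rfl fun j _ => by ring
        _ = ∑ i, ∑ b', ∑ j, α i a * γ j c * (star (bB b b') * T (i,j) b') := Finset.sum_comm
        _ = ∑ i, ∑ j, ∑ b', α i a * γ j c * (star (bB b b') * T (i,j) b') :=
            Finset.sum_congr rfl fun i _ => Finset.sum_comm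
        _ = ∑ i, ∑ j, α i a * γ j c * (∑ b', star (bB b b') * T (i,j) b') := by
            refine Finset.sum_congr rfl fun i _ => Finset.sum_congr rfl fun j _ => ?_
            rw [Finset.mul_sum]
    rw [step1]
    have hzero₁ : ∀ i ∈ Finset.univ, i ∉ S₁ →
        (∑ j, α i a * γ j c * (∑ b', star (bB b b') * T (i,j) b')) = 0 := by
      intro i _ hi
      have hpi : p i = 0 := by
        by_contra h
        exact hi (by rw [hS₁, Finset.mem_filter]; exact ⟨Finset.mem_univ i, h⟩)
      refine Finset.sum_eq_zero fun j _ => ?_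
      rw [show (∑ b', star (bB b b') * T (i,j) b') = 0 from Finset.sum_eq_zero fun b' _ => by
        rw [hZ i j (by rw [hpi]; ring) b', mul_zero], mul_zero]
    rw [← Finset.sum_subset (Finset.subset_univ S₁) hzero₁]
    have hstep2 : ∀ i ∈ S₁, (∑ j, α i a * γ j c * (∑ b', star (bB b b') * T (i,j) b'))
        = ∑ j ∈ S₂, α i a * γ j c * (∑ b', star (bB b b') * T (i,j) b') := by
      intro i _
      refine (Finset.sum_subset (Finset.subset_univ S₂) ?_).symm
      intro j _ hj
      have hqj : q j = 0 := by
        by_contra h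
        exact hj (by rw [hS₂, Finset.mem_filter]; exact ⟨Finset.mem_univ j, h⟩)
      rw [show (∑ b', star (bB b b') * T (i,j) b') = 0 from Finset.sum_eq_zero fun b' _ => by
        rw [hZ i j (by rw [hqj]; ring) b', mul_zero], mul_zero]
    rw [Finset.sum_congr rfl hstep2]
    rw [← sum_reindex' S₁ e₁ he₁'
      (fun i => ∑ j ∈ S₂, α i a * γ j c * (∑ b', star (bB b b') * T (i,j) b'))]
    refine Finset.sum_congr rfl fun k _ => ?_
    rw [← sum_reindex' S₂ e₂ he₂'
      (fun j => α (e₁ k) a * γ j c * (∑ b', star (bB b b') * T (e₁ k,j) b'))]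
    refine Finset.sum_congr rfl fun l _ => ?_
    have hD : (∑ b', star (bB b b') * T (e₁ k, e₂ l) b')
        = ((Real.sqrt (p (e₁ k) * q (e₂ l)) : ℝ) : ℂ) * (if b = ι (k,l) then 1 else 0) := by
      calc (∑ b', star (bB b b') * T (e₁ k, e₂ l) b')
          = ∑ b', ((Real.sqrt (p (e₁ k) * q (e₂ l)) : ℝ) : ℂ)
            * (star (bB b b') * bB (ι (k,l)) b') := by
            refine Finset.sum_congr rfl fun b' _ => ?_
            rw [hTf k l b']
            ring
        _ = _ := by rw [← Finset.mul_sum, hbb b (ι (k,l))]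
    rw [hD, Real.sqrt_mul (hpnn _), Complex.ofReal_mul]
    by_cases hbι : ι (k,l) = b
    · rw [if_pos hbι, if_pos hbι.symm]
      ring
    · rw [if_neg hbι, if_neg (Ne.symm hbι)]
      simp
  -- orthonormal basis entrywise norms
  have hαnorm : ∀ i, ∑ a, ‖α i a‖^2 = 1 := by
    intro i
    have h := (orthonormal_iff_ite.mp α.orthonormal) i i
    rw [inner_eucl, if_pos rfl] at h
    have h2 : ((∑ a, ‖α i a‖^2 : ℝ) : ℂ) = 1 := by
      rw [Complex.ofReal_sum, ← h]
      exact Finset.sum_congr rfl fun a _ => (conj_mul_self_eq _).symm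
    exact_mod_cast h2
  have hγnorm : ∀ j, ∑ c, ‖γ j c‖^2 = 1 := by
    intro j
    have h := (orthonormal_iff_ite.mp γ.orthonormal) j j
    rw [inner_eucl, if_pos rfl] at h
    have h2 : ((∑ c, ‖γ j c‖^2 : ℝ) : ℂ) = 1 := by
      rw [Complex.ofReal_sum, ← h]
      exact Finset.sum_congr rfl fun c _ => (conj_mul_self_eq _).symm
    exact_mod_cast h2
  -- normalization of the two factors
  have hφnorm : (∑ x : A × Fin (Fintype.card S₁),
      ‖((Real.sqrt (p (e₁ x.2)) : ℝ) : ℂ) * α (e₁ x.2) x.1‖^2) = 1 := by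
    rw [Fintype.sum_prod_type, Finset.sum_comm]
    calc ∑ k, ∑ a, ‖((Real.sqrt (p (e₁ k)) : ℝ) : ℂ) * α (e₁ k) a‖^2
        = ∑ k, p (e₁ k) := by
          refine Finset.sum_congr rfl fun k _ => ?_
          have hterm : ∀ a, ‖((Real.sqrt (p (e₁ k)) : ℝ) : ℂ) * α (e₁ k) a‖^2
              = p (e₁ k) * ‖α (e₁ k) a‖^2 := by
            intro a
            rw [norm_mul, Complex.norm_real, Real.norm_eq_abs,
              abs_of_nonneg (Real.sqrt_nonneg _), mul_pow, Real.sq_sqrt (hpnn _)]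
          simp only [hterm]
          rw [← Finset.mul_sum, hαnorm (e₁ k), mul_one]
      _ = 1 := hsum₁
  have hηnorm : (∑ x : Fin (Fintype.card S₂) × C,
      ‖((Real.sqrt (q (e₂ x.1)) : ℝ) : ℂ) * γ (e₂ x.1) x.2‖^2) = 1 := by
    rw [Fintype.sum_prod_type]
    calc ∑ l, ∑ c, ‖((Real.sqrt (q (e₂ l)) : ℝ) : ℂ) * γ (e₂ l) c‖^2
        = ∑ l, q (e₂ l) := by
          refine Finset.sum_congr rfl fun l _ => ?_
          have hterm : ∀ c, ‖((Real.sqrt (q (e₂ l)) : ℝ) : ℂ) * γ (e₂ l) c‖^2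
              = q (e₂ l) * ‖γ (e₂ l) c‖^2 := by
            intro c
            rw [norm_mul, Complex.norm_real, Real.norm_eq_abs,
              abs_of_nonneg (Real.sqrt_nonneg _), mul_pow, Real.sq_sqrt (hqnn _)]
          simp only [hterm]
          rw [← Finset.mul_sum, hγnorm (e₂ l), mul_one]
      _ = 1 := hsum₂
  -- assemble
  refine ⟨Fintype.card S₁, Fintype.card S₂, ι, Matrix.of (fun b b' => star (bB b b')), hU,
    (fun x => ((Real.sqrt (p (e₁ x.2)) : ℝ) : ℂ) * α (e₁ x.2) x.1),
    (fun x => ((Real.sqrt (q (e₂ x.1)) : ℝ) : ℂ) * γ (e₂ x.1) x.2),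
    hφnorm, hηnorm, ?_, ?_⟩
  · intro a b₁ b₂ c
    simp only [Matrix.of_apply]
    rw [hkey a (ι (b₁,b₂)) c]
    rw [Finset.sum_eq_single b₁ (fun k _ hk => Finset.sum_eq_zero fun l _ => by
        rw [if_neg (fun h => hk (congrArg Prod.fst (ι.injective h)))])
      (fun h => absurd (Finset.mem_univ b₁) h)]
    rw [Finset.sum_eq_single b₂ (fun l _ hl => by
        rw [if_neg (fun h => hl (congrArg Prod.snd (ι.injective h)))])
      (fun h => absurd (Finset.mem_univ b₂) h)]
    rw [if_pos rfl]
    ring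
  · intro a b c hb
    simp only [Matrix.of_apply]
    rw [hkey a b c]
    refine Finset.sum_eq_zero fun k _ => Finset.sum_eq_zero fun l _ => ?_
    exact if_neg fun h => hb ⟨(k,l), h⟩
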